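/- With the weak semidirect product monoid N ⋊_{E,φ} H as above, the maps k(n) = ([n],1), e([n],h) = h and s(h) = ([1],h) form a weakly Schreier split extension: k is the kernel of e, e is the cokernel of k, e ∘ s = id, and every element ([n],h) equals k(n)·s(h). -/
import Mathlib


/-- An admissible H-indexed equivalence relation E on N: for each h an equivalence
relation ∼^h on N such that ∼^1 is equality, left multiplication preserves ∼^h, and
n ∼^h n' implies n ∼^{h·y} n'. -/
structure IndexedEqv (H N : Type*) [Monoid H] [Monoid N] where
  r : H → N → N → Prop
  iseqv : ∀ h, Equivalence (r h)
  one_eq : ∀ {n n' : N}, r 1 n n' → n = n'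
  mul_left : ∀ (x : N) {h : H} {n n' : N}, r h n n' → r h (x * n) (x * n')
  mul_right : ∀ (y : H) {h : H} {n n' : N}, r h n n' → r (h * y) n n'

def IndexedEqv.setoid {H N : Type*} [Monoid H] [Monoid N] (E : IndexedEqv H N) (h : H) :
    Setoid N := ⟨E.r h, E.iseqv h⟩

/-- α : H × N → N is a compatible action for the admissible indexed equivalence relation E. -/
structure CompatibleAction {H N : Type*} [Monoid H] [Monoid N] (E : IndexedEqv H N)
    (α : H → N → N) : Prop where
  c1 : ∀ (h : H) (n n' x : N), E.r h n n' → E.r h (n * α h x) (n' * α h x)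
  c2 : ∀ (h : H) (n n' : N) (x : H), E.r h n n' → E.r (x * h) (α x n) (α x n')
  c3 : ∀ (h : H) (n n' : N), E.r h (α h (n * n')) (α h n * α h n')
  c4 : ∀ (h h' : H) (n : N), E.r (h * h') (α (h * h') n) (α h (α h' n))
  c5 : ∀ h : H, E.r h (α h 1) 1
  c6 : ∀ n : N, E.r 1 (α 1 n) n

/-- The carrier ⨆_{h ∈ H} N/∼^h of the weak semidirect product. -/
def WProd {H N : Type*} [Monoid H] [Monoid N] (E : IndexedEqv H N) : Type _ :=
  (h : H) × Quotient (E.setoid h)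

/-- The element ([n], h). -/
def wmk {H N : Type*} [Monoid H] [Monoid N] (E : IndexedEqv H N) (h : H) (n : N) : WProd E :=
  ⟨h, Quotient.mk (E.setoid h) n⟩

/-- The multiplication ([n],h)·([n'],h') = ([n·α(h,n')], h·h') of the weak semidirect
product N ⋊_{E,α} H. -/
def wmul {H N : Type*} [Monoid H] [Monoid N] (E : IndexedEqv H N) {α : H → N → N}
    (hα : CompatibleAction E α) : WProd E → WProd E → WProd E :=
  fun x y =>
    ⟨x.1 * y.1,
      Quotient.liftOn₂ x.2 y.2
        (fun n n' => Quotient.mk (E.setoid (x.1 * y.1)) (n * α x.1 n'))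
        (fun a c b d hab hcd =>
          Quotient.sound
            ((E.iseqv (x.1 * y.1)).trans
              (E.mul_right y.1 (hα.c1 x.1 a b c hab))
              (E.mul_left b (hα.c2 y.1 c d x.1 hcd))))⟩


theorem wmk_congr {H N : Type*} [Monoid H] [Monoid N] (E : IndexedEqv H N)
    {h h' : H} {n n' : N} (hh : h = h') (hn : E.r h' n n') :
    wmk E h n = wmk E h' n' := by
  subst hh
  exact congrArg (fun q => (⟨h, q⟩ : WProd E)) (Quotient.sound hn)

/-- With the weak semidirect product N ⋊_{E,α} H (carrier `WProd E`,
multiplication `wmul`), the maps k(n) = ([n],1), e([n],h) = h and s(h) = ([1],h) form a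
weakly Schreier split extension: k and e and s are monoid homomorphisms, k is the kernel of
e (k is injective with image exactly e⁻¹(1)), e is the cokernel of k (universal property),
e ∘ s = id, and every element ([n],h) equals k(n)·s(h). -/
theorem wprod_weakly_schreier_split_extension {H N : Type*} [Monoid H] [Monoid N]
    (E : IndexedEqv H N) (α : H → N → N) (hα : CompatibleAction E α) :
    -- k is a monoid homomorphism
    (∀ n n' : N, wmk E 1 (n * n') = wmul E hα (wmk E 1 n) (wmk E 1 n')) ∧
    -- e is a monoid homomorphism
    (∀ x y : WProd E, (wmul E hα x y).1 = x.1 * y.1) ∧ (wmk E 1 (1 : N)).1 = 1 ∧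
    -- s is a monoid homomorphism
    (∀ h h' : H, wmk E (h * h') 1 = wmul E hα (wmk E h 1) (wmk E h' 1)) ∧
    -- e ∘ s = id
    (∀ h : H, (wmk E h (1 : N)).1 = h) ∧
    -- k is the kernel of e: injective, with image exactly the elements sent by e to 1
    Function.Injective (fun n => wmk E 1 n) ∧
    (∀ x : WProd E, x.1 = 1 ↔ ∃ n : N, x = wmk E 1 n) ∧
    -- e is the cokernel of k: universal property of the coequaliser of k with the zero map
    (∀ (P : Type*) [Monoid P] (f : WProd E → P),
      (∀ x y, f (wmul E hα x y) = f x * f y) → f (wmk E 1 1) = 1 →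
      (∀ n : N, f (wmk E 1 n) = 1) →
      ∃! g : H → P, (∀ a b : H, g (a * b) = g a * g b) ∧ g 1 = 1 ∧ ∀ x : WProd E, g x.1 = f x) ∧
    -- the splitting is weakly Schreier: ([n],h) = k(n)·s(h)
    (∀ x : WProd E, ∃ n : N, x = wmul E hα (wmk E 1 n) (wmk E x.1 1)) := by
  
  have hmul : ∀ (h h' : H) (n n' : N),
      wmul E hα (wmk E h n) (wmk E h' n') = wmk E (h * h') (n * α h n') := fun _ _ _ _ => rfl
  have hs : ∀ h h' : H, wmk E (h * h') 1 = wmul E hα (wmk E h 1) (wmk E h' 1) := by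
    intro h h'
    rw [hmul]
    refine wmk_congr E rfl ?_
    have := E.mul_right h' (E.mul_left (1 : N) (hα.c5 h))
    exact (E.iseqv _).symm (((E.iseqv _).trans this (by rw [mul_one]; exact (E.iseqv _).refl 1)))
  have hw : ∀ x : WProd E, ∃ n : N, x = wmul E hα (wmk E 1 n) (wmk E x.1 1) := by
    rintro ⟨h, q⟩
    induction q using Quotient.ind with
    | _ n =>
      refine ⟨n, ?_⟩
      rw [hmul]
      refine wmk_congr E (one_mul h).symm ?_
      have := E.mul_right h (E.mul_left n (hα.c5 1))
      exact (E.iseqv _).symm ((E.iseqv _).trans this (by rw [mul_one]; exact (E.iseqv _).refl n))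
  refine ⟨?_, fun _ _ => rfl, rfl, hs, fun _ => rfl, ?_, ?_, ?_, hw⟩
  · intro n n'
    rw [hmul]
    refine wmk_congr E (one_mul 1).symm ?_
    exact (E.iseqv _).symm (E.mul_right 1 (E.mul_left n (hα.c6 n')))
  · intro n n' h
    have h2 : (Quotient.mk (E.setoid 1) n) = Quotient.mk (E.setoid 1) n' := by
      exact eq_of_heq (Sigma.mk.inj_iff.mp h).2
    exact E.one_eq (Quotient.exact h2)
  · rintro ⟨h, q⟩
    constructor
    · rintro rfl
      induction q using Quotient.ind with
      | _ n => exact ⟨n, rfl⟩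
    · rintro ⟨n, hn⟩
      rw [hn]
      rfl
  · intro P _ f hf hf1 hfk
    refine ⟨fun h => f (wmk E h 1), ⟨?_, hf1, ?_⟩, ?_⟩
    · intro a b
      show f (wmk E (a * b) 1) = _
      rw [hs a b, hf]
    · intro x
      obtain ⟨n, hn⟩ := hw x
      rw (occs := .pos [2]) [hn]
      rw [hf, hfk, one_mul]
    · rintro g ⟨-, -, hg3⟩
      funext h
      exact hg3 (wmk E h 1)
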